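/- For any two points z, w in the open unit disk D ⊂ ℂ, there exists a holomorphic automorphism T of D (a linear fractional transformation preserving D) such that T(z) = conj(z) and T(w) = conj(w). -/

import Mathlib

open Complex ComplexConjugate

private lemma one_sub_ne (x : ℂ) (h : ‖x‖ < 1) : (1:ℂ) - x ≠ 0 := by
  intro he
  rw [sub_eq_zero] at he
  rw [← he] at h
  simp at h

theorem stmt12 :
    ∀ z w : ℂ, ‖z‖ < 1 → ‖w‖ < 1 →
      ∃ (θ : ℝ) (a : ℂ), ‖a‖ < 1 ∧
        Complex.exp ((θ : ℂ) * Complex.I) * (z - a) / (1 - (starRingEnd ℂ) a * z)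
          = (starRingEnd ℂ) z ∧
        Complex.exp ((θ : ℂ) * Complex.I) * (w - a) / (1 - (starRingEnd ℂ) a * w)
          = (starRingEnd ℂ) w := by
  intro z w hz hw
  have hzw : ‖z * conj w‖ < 1 := by
    rw [norm_mul, Complex.norm_conj]
    calc ‖z‖ * ‖w‖ ≤ ‖z‖ * 1 :=
          mul_le_mul_of_nonneg_left hw.le (norm_nonneg z)
      _ = ‖z‖ := mul_one _
      _ < 1 := hz
  have hden1 : (1:ℂ) - z * conj w ≠ 0 := one_sub_ne _ hzw
  set μ : ℂ := if w = z then 1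
    else ((conj w - conj z) * (1 - conj z * w)) / ((w - z) * (1 - z * conj w)) with hμdef
  have hμ1 : μ * conj μ = 1 := by
    by_cases h : w = z
    · simp [hμdef, h]
    · have hwz : w - z ≠ 0 := sub_ne_zero.mpr h
      have hwz' : conj w - conj z ≠ 0 := by
        rw [sub_ne_zero]
        exact fun hh => h ((starRingEnd ℂ).injective hh)
      have hden2 : (1:ℂ) - conj z * w ≠ 0 := by
        intro he
        apply hden1
        have := congrArg (starRingEnd ℂ) he
        simpa [map_sub, map_mul, mul_comm] using this
      rw [hμdef]
      simp only [if_neg h, map_div₀, map_mul, map_sub, map_one, Complex.conj_conj]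
      have hden1' : (1:ℂ) - conj w * z ≠ 0 := by rwa [mul_comm]
      field_simp
  have hμ2 : μ * ((w - z) * (1 - z * conj w)) = (conj w - conj z) * (1 - conj z * w) := by
    by_cases h : w = z
    · simp [hμdef, h]
    · have hwz : w - z ≠ 0 := sub_ne_zero.mpr h
      rw [hμdef]
      simp only [if_neg h]
      have hden1' : (1:ℂ) - conj w * z ≠ 0 := by rwa [mul_comm]
      field_simp
  have hμ0 : μ ≠ 0 := by
    intro h
    rw [h, zero_mul] at hμ1
    exact zero_ne_one hμ1
  set A : ℂ := μ - (conj z)^2 with hA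
  set B : ℂ := conj z - μ * z with hB
  have hkey : A * conj A - B * conj B = (1 - z * conj z)^2 := by
    rw [hA, hB]
    simp only [map_sub, map_mul, map_pow, Complex.conj_conj]
    linear_combination (1 - z * conj z) * hμ1
  have hnsq : Complex.normSq A - Complex.normSq B = (1 - Complex.normSq z)^2 := by
    have h1 : (Complex.normSq A : ℂ) - Complex.normSq B = ((1 - Complex.normSq z)^2 : ℝ) := by
      push_cast
      rw [← Complex.mul_conj, ← Complex.mul_conj, ← Complex.mul_conj]
      linear_combination hkey
    exact_mod_cast h1
  have hzsq : Complex.normSq z < 1 := by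
    rw [← Complex.sq_norm]
    nlinarith [norm_nonneg z]
  have hpos : (0:ℝ) < (1 - Complex.normSq z)^2 := by
    have : (0:ℝ) < 1 - Complex.normSq z := by linarith
    positivity
  have hBA : Complex.normSq B < Complex.normSq A := by linarith
  have hA0 : A ≠ 0 := by
    intro h
    rw [h] at hBA
    have := Complex.normSq_nonneg B
    simp [Complex.normSq_zero] at hBA
    linarith
  have hcA0 : conj A ≠ 0 := by simpa using hA0
  set a : ℂ := -B / A with ha
  have hAabs : (0:ℝ) < ‖A‖ := norm_pos_iff.mpr hA0
  have haabs : ‖a‖ < 1 := by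
    have habs : ‖a‖ = ‖B‖ / ‖A‖ := by
      rw [ha, norm_div, norm_neg]
    rw [habs, div_lt_one hAabs]
    have h2 : ‖B‖ ^ 2 < ‖A‖ ^ 2 := by
      rw [Complex.sq_norm, Complex.sq_norm]; exact hBA
    nlinarith [norm_nonneg A, norm_nonneg B]
  set lam : ℂ := A / (μ * conj A) with hlam
  have hμabs : ‖μ‖ = 1 := by
    have h1 : ‖μ‖ * ‖μ‖ = 1 := by
      have := congrArg (‖·‖) hμ1
      rwa [norm_mul, Complex.norm_conj, norm_one] at this
    nlinarith [norm_nonneg μ]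
  have hlamabs : ‖lam‖ = 1 := by
    rw [hlam, norm_div, norm_mul, Complex.norm_conj, hμabs, one_mul]
    exact div_self hAabs.ne'
  have hexp : Complex.exp ((lam.arg : ℂ) * Complex.I) = lam := by
    have := Complex.norm_mul_exp_arg_mul_I lam
    rwa [hlamabs, Complex.ofReal_one, one_mul] at this
  have hca : conj a = -(conj B) / (conj A) := by
    rw [ha, map_div₀, map_neg]
  -- key polynomial identities
  have ez : A * z + B = μ * conj z * (conj A + conj B * z) := by
    rw [hA, hB]
    simp only [map_sub, map_mul, map_pow, Complex.conj_conj]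
    linear_combination (-(conj z * (1 - conj z * z))) * hμ1
  have ew : A * w + B = μ * conj w * (conj A + conj B * w) := by
    rw [hA, hB]
    simp only [map_sub, map_mul, map_pow, Complex.conj_conj]
    linear_combination hμ2 - conj w * (1 - conj z * w) * hμ1
  refine ⟨lam.arg, a, haabs, ?_, ?_⟩
  · rw [hexp]
    have hcaz : (1:ℂ) - conj a * z ≠ 0 := by
      apply one_sub_ne
      rw [norm_mul, Complex.norm_conj]
      calc ‖a‖ * ‖z‖ ≤ 1 * ‖z‖ :=
            mul_le_mul_of_nonneg_right haabs.le (norm_nonneg z)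
        _ = ‖z‖ := one_mul _
        _ < 1 := hz
    rw [div_eq_iff hcaz, hlam, hca, ha]
    field_simp
    linear_combination ez
  · rw [hexp]
    have hcaw : (1:ℂ) - conj a * w ≠ 0 := by
      apply one_sub_ne
      rw [norm_mul, Complex.norm_conj]
      calc ‖a‖ * ‖w‖ ≤ 1 * ‖w‖ :=
            mul_le_mul_of_nonneg_right haabs.le (norm_nonneg w)
        _ = ‖w‖ := one_mul _
        _ < 1 := hw
    rw [div_eq_iff hcaw, hlam, hca, ha]
    field_simp
    linear_combination ew
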